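/- If f : ℝ^{m×n} → ℝ is differentiable and lower bounded, and (W_t, M_t) solves the momentum ODE dW/dt = M, dM/dt = -γM - ∇f(W) with γ > 0, then ∫_0^∞ ‖M_t‖²_F dt ≤ (H(W_0, M_0) - inf f)/γ, where H(W,M) = f(W) + ‖M‖²_F/2. -/

import Mathlib

open scoped BigOperators
open MeasureTheory
open scoped RealInnerProductSpace

/-- If `f` is differentiable and lower bounded and `(W,M)` solves the momentum
ODE, then `∫_0^∞ ‖M_t‖²_F dt ≤ (H(W_0,M_0) - inf f)/γ`. -/
theorem stmt_13 (m n : ℕ)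
    (f : EuclideanSpace ℝ (Fin m × Fin n) → ℝ)
    (g : EuclideanSpace ℝ (Fin m × Fin n) → EuclideanSpace ℝ (Fin m × Fin n))
    (hf : ∀ x, HasGradientAt f (g x) x)
    (hbdd : BddBelow (Set.range f))
    (γ : ℝ) (hγ : 0 < γ)
    (W M : ℝ → EuclideanSpace ℝ (Fin m × Fin n))
    (hW : ∀ t, HasDerivAt W (M t) t)
    (hM : ∀ t, HasDerivAt M (-γ • M t - g (W t)) t) :
    ∫ t in Set.Ioi (0 : ℝ), ‖M t‖ ^ 2
      ≤ (f (W 0) + ‖M 0‖ ^ 2 / 2 - sInf (Set.range f)) / γ := by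
  have hinf : ∀ x, sInf (Set.range f) ≤ f x := fun x => csInf_le hbdd ⟨x, rfl⟩
  set C : ℝ := f (W 0) + ‖M 0‖ ^ 2 / 2 - sInf (Set.range f) with hC
  set H : ℝ → ℝ := fun t => f (W t) + ‖M t‖ ^ 2 / 2 with hHdef
  have hMd : Differentiable ℝ M := fun t => (hM t).differentiableAt
  have hMc : Continuous M := hMd.continuous
  have hφc : Continuous fun t => ‖M t‖ ^ 2 := (hMc.norm).pow 2
  -- derivative of the Lyapunov function
  have hH' : ∀ t, HasDerivAt H (-(γ * ‖M t‖ ^ 2)) t := by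
    intro t
    have h1 : HasDerivAt (fun t => f (W t)) (⟪g (W t), M t⟫) t := by
      have h := ((hf (W t)).hasFDerivAt.comp_hasDerivAt t (hW t))
      simp at h; exact h
    have h2 : HasDerivAt (fun t => (⟪M t, M t⟫) / 2)
        ((⟪M t, -γ • M t - g (W t)⟫ + ⟪-γ • M t - g (W t), M t⟫) / 2) t :=
      (HasDerivAt.inner ℝ (hM t) (hM t)).div_const 2
    have h3 : HasDerivAt (fun t => f (W t) + (⟪M t, M t⟫) / 2)
        (⟪g (W t), M t⟫ + (⟪M t, -γ • M t - g (W t)⟫ + ⟪-γ • M t - g (W t), M t⟫) / 2) t :=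
      h1.add h2
    have heq : H = fun t => f (W t) + (⟪M t, M t⟫) / 2 := by
      funext t; simp only [hHdef, real_inner_self_eq_norm_sq]
    rw [heq]
    convert h3 using 1
    simp only [inner_sub_left, inner_sub_right, inner_neg_left, inner_neg_right,
      real_inner_smul_left, real_inner_smul_right, real_inner_self_eq_norm_sq,
      real_inner_comm (M t) (g (W t))]
    ring
  -- the key interval identity
  have key : ∀ T : ℝ, γ * ∫ t in (0:ℝ)..T, ‖M t‖ ^ 2 = H 0 - H T := by
    intro T
    have hint : IntervalIntegrable (fun t => -(γ * ‖M t‖ ^ 2)) volume 0 T :=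
      ((continuous_const.mul hφc).neg).intervalIntegrable 0 T
    have := intervalIntegral.integral_eq_sub_of_hasDerivAt
      (f := H) (f' := fun t => -(γ * ‖M t‖ ^ 2)) (fun t _ => hH' t) hint
    rw [intervalIntegral.integral_neg, intervalIntegral.integral_const_mul] at this
    linarith
  have hHlb : ∀ T, sInf (Set.range f) ≤ H T := by
    intro T
    have := hinf (W T)
    have h0 : (0:ℝ) ≤ ‖M T‖ ^ 2 / 2 := by positivity
    simp only [hHdef]; linarith
  have hbound : ∀ T : ℝ, ∫ t in (0:ℝ)..T, ‖M t‖ ^ 2 ≤ C / γ := by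
    intro T
    rw [le_div_iff₀ hγ]
    have := key T
    have := hHlb T
    simp only [hHdef, hC] at *
    nlinarith [key T, hHlb T]
  -- integrability on Ioi
  have hInt : IntegrableOn (fun t => ‖M t‖ ^ 2) (Set.Ioi (0:ℝ)) volume := by
    refine integrableOn_Ioi_of_intervalIntegral_norm_bounded (C / γ) 0
      (fun i => ((hφc.intervalIntegrable 0 i).1)) Filter.tendsto_id ?_
    filter_upwards with i
    have : (∫ x in (0:ℝ)..i, ‖‖M x‖ ^ 2‖) = ∫ x in (0:ℝ)..i, ‖M x‖ ^ 2 := by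
      congr 1; funext x; exact abs_of_nonneg (sq_nonneg _)
    rw [this]; exact hbound i
  have htend := intervalIntegral_tendsto_integral_Ioi (μ := volume) 0 hInt Filter.tendsto_id
  exact le_of_tendsto htend (Filter.Eventually.of_forall fun i => hbound i)
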